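/- For every λ ∈ k with λ ≠ 0, the element t − λ is a nonunit in B; equivalently, the quotient ring B/(t−λ)B is nontrivial. Moreover, t itself is a unit in B, so B/tB is the zero ring. -/

import Mathlib

open LaurentPolynomial FreeAlgebra

noncomputable section

/-- Generators `e`, `f`, `h`. -/
inductive Bgen | e | f | h

variable (k : Type*) [Field k] [CharZero k]

/-- The free algebra over the Laurent polynomial ring `k[t,t⁻¹]` on `e, f, h`. -/
abbrev FB := FreeAlgebra (LaurentPolynomial k) Bgen

/-- The defining relations of `B`:
`ef − fe = (t−1)h`, `he − eh = 2(t−1)e`, `hf − fh = −2(t−1)f`. -/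
inductive Brel : FB k → FB k → Prop
  | ef : Brel (ι _ .e * ι _ .f - ι _ .f * ι _ .e)
      (algebraMap (LaurentPolynomial k) (FB k) (T 1 - 1) * ι _ .h)
  | he : Brel (ι _ .h * ι _ .e - ι _ .e * ι _ .h)
      (algebraMap (LaurentPolynomial k) (FB k) (2 * (T 1 - 1)) * ι _ .e)
  | hf : Brel (ι _ .h * ι _ .f - ι _ .f * ι _ .h)
      (-(algebraMap (LaurentPolynomial k) (FB k) (2 * (T 1 - 1))) * ι _ .f)

/-- `B`, the `k[t,t⁻¹]`-algebra generated by `e, f, h` subject to the relations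
`ef − fe = (t−1)h`, `he − eh = 2(t−1)e`, `hf − fh = −2(t−1)f` (the quotient of the
free algebra by the two-sided ideal generated by the relations). -/
abbrev B := RingQuot (Brel k)

/-- The generator `e` of `B`. -/
def Be : B k := RingQuot.mkAlgHom (LaurentPolynomial k) _ (ι _ .e)
/-- The generator `f` of `B`. -/
def Bf : B k := RingQuot.mkAlgHom (LaurentPolynomial k) _ (ι _ .f)
/-- The generator `h` of `B`. -/
def Bh : B k := RingQuot.mkAlgHom (LaurentPolynomial k) _ (ι _ .h)
/-- The image of `t` in `B`. -/
def Bt : B k := algebraMap (LaurentPolynomial k) (B k) (T 1)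

/-- The algebra map `B → k[t,t⁻¹]` killing `e,f,h`. -/
def Bpsi : B k →ₐ[LaurentPolynomial k] LaurentPolynomial k :=
  RingQuot.liftAlgHom (LaurentPolynomial k)
    ⟨FreeAlgebra.lift (LaurentPolynomial k) (fun _ => (0 : LaurentPolynomial k)), by
      intro a b hab
      cases hab <;> simp⟩

/-- for every nonzero `λ ∈ k`, the element `t − λ` is a nonunit in `B`
(equivalently `B/(t−λ)B` is nontrivial), while `t` itself is a unit in `B`
(so `B/tB` is the zero ring). -/
theorem t_sub_lam_not_unit_and_t_unit :
    (∀ lam : k, lam ≠ 0 → ¬ IsUnit (Bt k - algebraMap k (B k) lam)) ∧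
    IsUnit (Bt k) := by
  constructor
  · intro lam hlam hu
    set u : kˣ := Units.mk0 lam hlam
    set ev : LaurentPolynomial k →ₐ[k] k :=
      AddMonoidAlgebra.lift k k ℤ ((Units.coeHom k).comp (zpowersHom kˣ u))
    have h1 : ev ((Bpsi k) (Bt k - algebraMap k (B k) lam)) = 0 := by
      rw [map_sub (Bpsi k) (Bt k) (algebraMap k (B k) lam), Bt]
      have h2 : (Bpsi k) (algebraMap (LaurentPolynomial k) (B k) (T 1)) = T 1 :=
        (Bpsi k).commutes _
      have h3 : (Bpsi k) (algebraMap k (B k) lam) = algebraMap k (LaurentPolynomial k) lam := by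
        rw [IsScalarTower.algebraMap_apply k (LaurentPolynomial k) (B k), (Bpsi k).commutes]
        simp
      rw [h2, h3, map_sub, AlgHom.commutes]
      have h4 : ev (T 1) = lam := by
        rw [show (T 1 : LaurentPolynomial k) = AddMonoidAlgebra.single (1:ℤ) (1:k) from rfl,
          AddMonoidAlgebra.lift_single]
        simp [u]
      rw [h4]; simp
    have := (hu.map (Bpsi k)).map ev
    rw [h1] at this
    exact this.ne_zero rfl
  · exact (isUnit_T (1 : ℤ)).map (algebraMap (LaurentPolynomial k) (B k))
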